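/- Let K be an infinite field, S = K[x_1,...,x_{n-1}] with n ≥ 3, and let l_0,...,l_{p-1} be linear forms (homogeneous of degree 1) in S in general position (any two are linearly independent, and more strongly the hyperplanes V(l_j) are distinct). Define f_i = ∏_{j ≠ i} l_j for i = 0,...,p-1. Then for each i, f_i ∉ ⟨f_0,...,f_{i-1}⟩_S. -/

import Mathlib

open MvPolynomial


lemma degree_one_single {σ : Type*} {d : σ →₀ ℕ} (hd : d.degree = 1) :
    ∃ s, d = Finsupp.single s 1 := by
  classical
  have hne : d ≠ 0 := by rintro rfl; simp [map_zero] at hd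
  obtain ⟨s, hs⟩ := Finsupp.ne_iff.mp hne
  simp only [Finsupp.coe_zero, Pi.zero_apply] at hs
  refine ⟨s, ?_⟩
  have hds : d s ≤ 1 := hd ▸ Finsupp.le_degree s d
  have hds1 : d s = 1 := le_antisymm hds (Nat.one_le_iff_ne_zero.mpr hs)
  ext t
  rcases eq_or_ne t s with rfl | hts
  · simp [hds1]
  · rw [Finsupp.single_eq_of_ne' (Ne.symm hts)]
    by_contra ht
    have hsub : ({s, t} : Finset σ) ⊆ d.support := by
      intro u hu
      simp only [Finset.mem_insert, Finset.mem_singleton] at hu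
      rcases hu with rfl | rfl <;> simp [Finsupp.mem_support_iff, hs, ht]
    have : d s + d t ≤ d.degree := by
      have := Finset.sum_le_sum_of_subset hsub (f := fun u => d u)
      rwa [Finset.sum_insert (by simp [Ne.symm hts]), Finset.sum_singleton] at this
    have h1 : 1 ≤ d t := Nat.one_le_iff_ne_zero.mpr ht
    omega

lemma linear_decomp {K : Type*} [Field K] {m : ℕ} {q : MvPolynomial (Fin m) K}
    (h : q.IsHomogeneous 1) :
    q = ∑ t : Fin m, C (q.coeff (Finsupp.single t 1)) * X t := by
  ext e
  rw [coeff_sum]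
  simp only [coeff_C_mul, coeff_X']
  by_cases he : ∃ u, e = Finsupp.single u 1
  · obtain ⟨u, rfl⟩ := he
    rw [Finset.sum_eq_single u]
    · simp
    · intro t _ htu
      rw [if_neg, mul_zero]
      intro hcontra
      exact htu (Finsupp.single_left_injective one_ne_zero hcontra)
    · simp
  · rw [h.coeff_eq_zero (fun hdeg => he (degree_one_single hdeg))]
    refine (Finset.sum_eq_zero ?_).symm
    intro t _
    rw [if_neg (fun hc => he ⟨t, hc.symm⟩), mul_zero]


/-- For `F_*S` free over `S = K[x_1,…,x_n]` with basis `{F_*(x^α) : α ∈ {0,…,p-1}^n}`,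
`frobCoeff p α f` is the coefficient `s_α ∈ S` in the expansion
`F_*f = Σ_α s_α • F_*(x^α)`, i.e. `f = Σ_α s_α^p x^α`. -/
noncomputable def frobCoeff {K : Type*} [Field K] (p : ℕ) [Fact p.Prime] [ExpChar K p]
    [PerfectRing K p] {n : ℕ} (α : Fin n → ℕ) (f : MvPolynomial (Fin n) K) :
    MvPolynomial (Fin n) K :=
  ∑ d ∈ f.support,
    if ∀ i, d i % p = α i then
      monomial (Finsupp.mapRange (· / p) (Nat.zero_div p) d)
        ((frobeniusEquiv K p).symm (f.coeff d))
    else 0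

/-- The generating trace map `Φ : F_*S → S`, the `S`-linear projection onto the
coefficient of `F_*(x_1^(p-1) ⋯ x_n^(p-1))`. -/
noncomputable def phi {K : Type*} [Field K] (p : ℕ) [Fact p.Prime] [ExpChar K p]
    [PerfectRing K p] {n : ℕ} (f : MvPolynomial (Fin n) K) : MvPolynomial (Fin n) K :=
  frobCoeff p (fun _ => p - 1) f

/-- The ideal `Φ(F_*(f•S)) = {Φ(F_*(f•h)) : h ∈ S}`, which computes the test ideal
`τ(S, f^(1/p))`. -/
noncomputable def tauP {K : Type*} [Field K] (p : ℕ) [Fact p.Prime] [ExpChar K p]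
    [PerfectRing K p] {n : ℕ} (f : MvPolynomial (Fin n) K) : Ideal (MvPolynomial (Fin n) K) :=
  Ideal.span {g | ∃ h, g = phi p (f * h)}

/-- over an infinite field, for pairwise non-proportional linear forms
`l_0, …, l_(p-1)` in `K[x_1, …, x_(n-1)]` (`n ≥ 3`) and `f_i = ∏_(j ≠ i) l_j`, one has
`f_i ∉ ⟨f_0, …, f_(i-1)⟩` for every `i`. -/
theorem statement7 {K : Type*} [Field K] [Infinite K] (p m : ℕ) [Fact p.Prime] (hm : 2 ≤ m)
    (l : Fin p → MvPolynomial (Fin m) K)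
    (hhom : ∀ j, (l j).IsHomogeneous 1) (hne : ∀ j, l j ≠ 0)
    (hprop : ∀ i j, i ≠ j → ∀ c : K, l i ≠ C c * l j) :
    ∀ i : Fin p, (∏ j ∈ Finset.univ.erase i, l j) ∉
      Ideal.span {g | ∃ j : Fin p, j < i ∧ g = ∏ k ∈ Finset.univ.erase j, l k} := by
  intro i hmem
  -- l i divides every generator, hence divides f_i
  have hle : Ideal.span {g | ∃ j : Fin p, j < i ∧ g = ∏ k ∈ Finset.univ.erase j, l k}
      ≤ Ideal.span {l i} := by
    rw [Ideal.span_le]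
    rintro g ⟨j, hj, rfl⟩
    rw [SetLike.mem_coe, Ideal.mem_span_singleton]
    exact Finset.dvd_prod_of_mem l (Finset.mem_erase.mpr ⟨(ne_of_lt hj).symm, Finset.mem_univ i⟩)
  obtain ⟨g, hg⟩ := Ideal.mem_span_singleton.mp (hle hmem)
  -- pick s with nonzero coefficient c of X s in l i
  obtain ⟨d, hd⟩ := exists_coeff_ne_zero (hne i)
  have hdeg : d.degree = 1 := by rw [Finsupp.degree_eq_weight_one]; exact (hhom i) hd
  obtain ⟨s, rfl⟩ := degree_one_single hdeg
  set c : K := (l i).coeff (Finsupp.single s 1) with hc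
  -- the substitution killing l i
  set ψ : MvPolynomial (Fin m) K →ₐ[K] MvPolynomial (Fin m) K :=
    aeval (fun t => if t = s then X s - C c⁻¹ * l i else X t) with hψ
  have key : ∀ q : MvPolynomial (Fin m) K, q.IsHomogeneous 1 →
      ψ q = q - C (c⁻¹ * q.coeff (Finsupp.single s 1)) * l i := by
    intro q hq
    conv_lhs => rw [linear_decomp hq]
    rw [map_sum]
    simp only [map_mul, aeval_C, aeval_X, hψ]
    rw [Finset.sum_congr rfl (fun t _ => rfl)]
    have : ∀ t : Fin m, algebraMap K (MvPolynomial (Fin m) K) (q.coeff (Finsupp.single t 1)) *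
        (if t = s then X s - C c⁻¹ * l i else X t)
        = C (q.coeff (Finsupp.single t 1)) * X t
          - (if t = s then C (c⁻¹ * q.coeff (Finsupp.single s 1)) * l i else 0) := by
      intro t
      rcases eq_or_ne t s with rfl | hts
      · rw [if_pos rfl, if_pos rfl, algebraMap_eq, C_mul]
        ring
      · simp [if_neg hts, algebraMap_eq]
    rw [Finset.sum_congr rfl (fun t _ => this t), Finset.sum_sub_distrib,
      Finset.sum_ite_eq' Finset.univ s, if_pos (Finset.mem_univ s), ← linear_decomp hq, C_mul]
  have hψli : ψ (l i) = 0 := by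
    rw [key (l i) (hhom i), ← hc, inv_mul_cancel₀, C_1, one_mul, sub_self]
    exact hd
  have hψlk : ∀ k, k ≠ i → ψ (l k) ≠ 0 := by
    intro k hk h0
    rw [key (l k) (hhom k), sub_eq_zero] at h0
    exact hprop k i hk _ h0
  have h1 : ψ (∏ j ∈ Finset.univ.erase i, l j) = 0 := by
    rw [hg, map_mul, hψli, zero_mul]
  rw [map_prod] at h1
  rw [Finset.prod_eq_zero_iff] at h1
  obtain ⟨k, hk, hk0⟩ := h1
  exact hψlk k (Finset.mem_erase.mp hk).1 hk0
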